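/- arXiv:2503.08279 — 3 statements merged into one kernel-verified Lean document; each statement's English description precedes it below -/
import Mathlib

section
/- Let κ : [0, ∞) → [0, ∞) be continuous, non-increasing, with b₀ := ∫_0^∞ t κ(t) dt < ∞. Let j : [0, ∞) → ℝ solve j'' = κ j with j(0) = 0, j'(0) = 1 and j > 0 on (0, ∞). Then j(t) ≤ e^{b₀} t for all t ≥ 0. -/
open MeasureTheory

/-- Monotonicity from a nonnegative derivative on the interior. -/
lemma stmt2_mono_aux {s : Set ℝ} (hs : Convex ℝ s) {f f' : ℝ → ℝ}
    (hc : ContinuousOn f s)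
    (hf : ∀ x ∈ interior s, HasDerivAt f (f' x) x)
    (h0 : ∀ x ∈ interior s, 0 ≤ f' x) : MonotoneOn f s :=
  monotoneOn_of_deriv_nonneg hs hc
    (fun x hx => (hf x hx).differentiableAt.differentiableWithinAt)
    (fun x hx => by rw [(hf x hx).deriv]; exact h0 x hx)

/-- if `κ : [0,∞) → [0,∞)` is continuous, non-increasing with finite
first moment `b₀ = ∫_0^∞ t κ(t) dt`, and `j` solves `j'' = κ j`, `j(0)=0`, `j'(0)=1`,
`j > 0` on `(0,∞)`, then `j(t) ≤ e^{b₀} t` for all `t ≥ 0`. -/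
theorem stmt2 (κ j j' : ℝ → ℝ)
    (hκcont : ContinuousOn κ (Set.Ici 0))
    (hκmono : AntitoneOn κ (Set.Ici 0))
    (hκnonneg : ∀ t, 0 ≤ t → 0 ≤ κ t)
    (hκint : IntegrableOn (fun t => t * κ t) (Set.Ici 0))
    (hj : ∀ t ∈ Set.Ici (0:ℝ), HasDerivAt j (j' t) t)
    (hj' : ∀ t ∈ Set.Ici (0:ℝ), HasDerivAt j' (κ t * j t) t)
    (hj0 : j 0 = 0) (hj'0 : j' 0 = 1)
    (hjpos : ∀ t : ℝ, 0 < t → 0 < j t) :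
    ∀ t : ℝ, 0 ≤ t → j t ≤ Real.exp (∫ s in Set.Ici (0:ℝ), s * κ s) * t := by
  set b₀ : ℝ := ∫ s in Set.Ici (0:ℝ), s * κ s with hb₀
  -- j is nonnegative on [0,∞)
  have hjnn : ∀ x : ℝ, 0 ≤ x → 0 ≤ j x := by
    intro x hx
    rcases hx.lt_or_eq with h | h
    · exact (hjpos x h).le
    · rw [← h, hj0]
  -- Step 1: j x ≤ x * j' x on [0,∞)
  have hG : ∀ x : ℝ, 0 ≤ x → j x ≤ x * j' x := by
    have hmono : MonotoneOn (fun x => x * j' x - j x) (Set.Ici 0) := by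
      apply stmt2_mono_aux (convex_Ici 0)
      · intro x hx
        exact (((hasDerivAt_id x).mul (hj' x hx)).sub (hj x hx)).continuousAt.continuousWithinAt
      · intro x hx
        rw [interior_Ici] at hx
        have := ((hasDerivAt_id x).mul (hj' x (Set.mem_Ici.mpr (le_of_lt hx)))).sub (hj x (Set.mem_Ici.mpr (le_of_lt hx)))
        exact this
      · intro x hx
        rw [interior_Ici] at hx
        have : (0:ℝ) ≤ x * (κ x * j x) :=
          mul_nonneg hx.le (mul_nonneg (hκnonneg x hx.le) (hjnn x hx.le))
        calc (0:ℝ) ≤ x * (κ x * j x) := this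
          _ = 1 * j' x + x * (κ x * j x) - j' x := by ring
    intro x hx
    have := hmono (Set.self_mem_Ici) (Set.mem_Ici.mpr hx) hx
    simp only [zero_mul, hj0, sub_zero] at this
    linarith
  -- the primitive Φ
  set Φ : ℝ → ℝ := fun x => ∫ s in (0:ℝ)..x, s * κ s with hΦ
  -- Φ x ≤ b₀ for x ≥ 0
  have hΦle : ∀ x : ℝ, 0 ≤ x → Φ x ≤ b₀ := by
    intro x hx
    rw [hΦ]
    simp only
    rw [intervalIntegral.integral_of_le hx]
    apply setIntegral_mono_set hκint
    · filter_upwards [ae_restrict_mem measurableSet_Ici] with s hs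
      exact mul_nonneg hs (hκnonneg s hs)
    · exact HasSubset.Subset.eventuallyLE (fun s hs => le_of_lt hs.1)
  -- fix t
  intro t ht
  rcases ht.lt_or_eq with ht' | ht'
  swap
  · rw [← ht', hj0]; simp
  -- work on [0, t]
  have hsub : Set.Icc (0:ℝ) t ⊆ Set.Ici 0 := fun x hx => hx.1
  -- Φ is continuous on [0, t], differentiable on (0, t) with derivative x * κ x
  have hΦcont : ContinuousOn Φ (Set.Icc 0 t) := by
    have : Set.uIcc (0:ℝ) t = Set.Icc 0 t := Set.uIcc_of_le ht
    rw [← this]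
    apply intervalIntegral.continuousOn_primitive_interval
    rw [this]
    exact hκint.mono_set (fun x hx => hx.1)
  have hΦderiv : ∀ x ∈ Set.Ioo (0:ℝ) t, HasDerivAt Φ (x * κ x) x := by
    intro x hx
    have hcx : ContinuousOn (fun s => s * κ s) (Set.Ioi 0) :=
      (continuousOn_id.mul hκcont).mono (fun y hy => Set.mem_Ici.mpr (le_of_lt hy))
    apply intervalIntegral.integral_hasDerivAt_right
    · apply ContinuousOn.intervalIntegrable
      have : Set.uIcc (0:ℝ) x = Set.Icc 0 x := Set.uIcc_of_le hx.1.le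
      rw [this]
      exact (continuousOn_id.mul hκcont).mono (fun y hy => hy.1)
    · exact hcx.stronglyMeasurableAtFilter isOpen_Ioi x hx.1
    · exact hcx.continuousAt (Ioi_mem_nhds hx.1)
  -- F = j' * exp(-Φ) is antitone on [0, t]
  have hFmono : MonotoneOn (fun x => -(j' x * Real.exp (-Φ x))) (Set.Icc 0 t) := by
    apply stmt2_mono_aux (convex_Icc 0 t)
    · apply ContinuousOn.neg
      apply ContinuousOn.mul
      · intro x hx
        exact (hj' x (hsub hx)).continuousAt.continuousWithinAt
      · exact (hΦcont.neg).rexp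
    · intro x hx
      rw [interior_Icc] at hx
      have h1 : HasDerivAt (fun x => Real.exp (-Φ x)) (Real.exp (-Φ x) * (-(x * κ x))) x :=
        (((hΦderiv x hx).neg).exp)
      have h2 := ((hj' x (hsub (Set.Ioo_subset_Icc_self hx))).mul h1).neg
      exact h2
    · intro x hx
      rw [interior_Icc] at hx
      have hx0 : (0:ℝ) ≤ x := hx.1.le
      have hle : j x ≤ x * j' x := hG x hx0
      have : κ x * j x * Real.exp (-Φ x) + j' x * (Real.exp (-Φ x) * -(x * κ x))
          = Real.exp (-Φ x) * (κ x * (j x - x * j' x)) := by ring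
      have hnn : Real.exp (-Φ x) * (κ x * (j x - x * j' x)) ≤ 0 :=
        mul_nonpos_of_nonneg_of_nonpos (Real.exp_nonneg _)
          (mul_nonpos_of_nonneg_of_nonpos (hκnonneg x hx0) (by linarith))
      simp only [neg_nonneg]
      rw [this]
      exact hnn
  -- hence j' x ≤ exp b₀ on [0, t]
  have hj'le : ∀ x ∈ Set.Icc (0:ℝ) t, j' x ≤ Real.exp b₀ := by
    intro x hx
    have h0mem : (0:ℝ) ∈ Set.Icc (0:ℝ) t := Set.left_mem_Icc.mpr ht
    have := hFmono h0mem hx hx.1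
    have hΦ0 : Φ 0 = 0 := by simp [hΦ]
    simp only [hΦ0, hj'0, neg_zero, Real.exp_zero, mul_one, neg_le_neg_iff] at this
    -- this : j' x * Real.exp (-Φ x) ≤ 1
    have h1 : j' x ≤ Real.exp (Φ x) := by
      have h2 := mul_le_mul_of_nonneg_right this (Real.exp_pos (Φ x)).le
      rwa [one_mul, mul_assoc, ← Real.exp_add, neg_add_cancel, Real.exp_zero, mul_one] at h2
    exact h1.trans (Real.exp_le_exp.mpr (hΦle x hx.1))
  -- conclude via monotonicity of x ↦ exp b₀ * x - j x
  have hfinal : MonotoneOn (fun x => Real.exp b₀ * x - j x) (Set.Icc 0 t) := by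
    apply stmt2_mono_aux (convex_Icc 0 t)
    · intro x hx
      exact (((hasDerivAt_id x).const_mul (Real.exp b₀)).sub (hj x (hsub hx))).continuousAt.continuousWithinAt
    · intro x hx
      rw [interior_Icc] at hx
      have := ((hasDerivAt_id x).const_mul (Real.exp b₀)).sub (hj x (hsub (Set.Ioo_subset_Icc_self hx)))
      exact this
    · intro x hx
      rw [interior_Icc] at hx
      have := hj'le x (Set.Ioo_subset_Icc_self hx)
      linarith
  have h0mem : (0:ℝ) ∈ Set.Icc (0:ℝ) t := Set.left_mem_Icc.mpr ht
  have htmem : t ∈ Set.Icc (0:ℝ) t := Set.right_mem_Icc.mpr ht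
  have := hfinal h0mem htmem ht
  simp only [mul_zero, hj0, sub_zero] at this
  linarith
end

section
/- Let κ : [0, ∞) → [0, ∞) be continuous, non-increasing, with κ(t) = o(t^{-2}) as t → ∞. Let σ : [0, ∞) → ℝ solve σ'' = κ σ with σ(0) = 0, σ'(0) = 1. Then lim_{t→∞} t σ'(t)/σ(t) = 1. -/
open MeasureTheory Filter Asymptotics

/-- if `κ : [0,∞) → [0,∞)` is continuous, non-increasing with
`κ(t) = o(t^{-2})` as `t → ∞`, and `σ` solves `σ'' = κ σ`, `σ(0)=0`, `σ'(0)=1`,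
then `t σ'(t)/σ(t) → 1` as `t → ∞`. -/
theorem stmt3 (κ σ σ' : ℝ → ℝ)
    (hκcont : ContinuousOn κ (Set.Ici 0))
    (hκmono : AntitoneOn κ (Set.Ici 0))
    (hκnonneg : ∀ t, 0 ≤ t → 0 ≤ κ t)
    (hκo : (fun t => κ t) =o[atTop] fun t : ℝ => t ^ (-2 : ℝ))
    (hσ : ∀ t ∈ Set.Ici (0:ℝ), HasDerivAt σ (σ' t) t)
    (hσ' : ∀ t ∈ Set.Ici (0:ℝ), HasDerivAt σ' (κ t * σ t) t)
    (hσ0 : σ 0 = 0) (hσ'0 : σ' 0 = 1) :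
    Tendsto (fun t => t * σ' t / σ t) atTop (nhds 1) := by
  have hσc : ContinuousOn σ (Set.Ici 0) := fun t ht =>
    (hσ t ht).continuousAt.continuousWithinAt
  have hσ'c : ContinuousOn σ' (Set.Ici 0) := fun t ht =>
    (hσ' t ht).continuousAt.continuousWithinAt
  -- positivity of σ near 0⁺
  have hnear : ∃ δ > (0:ℝ), ∀ t, 0 < t → t < δ → 0 < σ t := by
    have h0 : HasDerivAt σ 1 0 := by
      have := hσ 0 Set.self_mem_Ici; rwa [hσ'0] at this
    have h1 : Tendsto (slope σ 0) (nhdsWithin 0 {(0:ℝ)}ᶜ) (nhds 1) :=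
      hasDerivAt_iff_tendsto_slope.mp h0
    have h2 : ∀ᶠ t in nhdsWithin 0 {(0:ℝ)}ᶜ, 0 < slope σ 0 t :=
      h1.eventually (eventually_gt_nhds one_pos)
    have h3 : ∀ᶠ t in nhdsWithin (0:ℝ) (Set.Ioi 0), 0 < slope σ 0 t :=
      nhdsWithin_mono 0 (fun x hx => ne_of_gt hx) h2
    rw [eventually_iff, mem_nhdsGT_iff_exists_Ioo_subset] at h3
    obtain ⟨u, hu, hsub⟩ := h3
    refine ⟨u, hu, fun t ht htu => ?_⟩
    have h : 0 < t⁻¹ * (σ t - σ 0) := by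
      simpa [slope] using hsub ⟨ht, htu⟩
    have h2 := mul_pos ht h
    rw [mul_inv_cancel_left₀ (ne_of_gt ht)] at h2
    rw [hσ0, sub_zero] at h2
    exact h2
  obtain ⟨δ, hδpos, hδ⟩ := hnear
  -- positivity of σ on (0,∞)
  have hpos : ∀ t : ℝ, 0 < t → 0 < σ t := by
    by_contra h
    push_neg at h
    obtain ⟨t₀, ht₀, hσt₀⟩ := h
    set S : Set ℝ := {t | 0 < t ∧ σ t ≤ 0} with hS
    have hne : S.Nonempty := ⟨t₀, ht₀, hσt₀⟩
    have hbdd : BddBelow S := ⟨0, fun s hs => le_of_lt hs.1⟩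
    set t₁ := sInf S with ht₁def
    have ht₁lb : δ ≤ t₁ := by
      apply le_csInf hne
      intro s hs
      by_contra hlt
      push_neg at hlt
      exact absurd hs.2 (not_le.mpr (hδ s hs.1 hlt))
    have ht₁pos : 0 < t₁ := lt_of_lt_of_le hδpos ht₁lb
    -- σ t₁ ≤ 0
    have hσt₁ : σ t₁ ≤ 0 := by
      have hcl : t₁ ∈ closure S := csInf_mem_closure hne hbdd
      rw [mem_closure_iff_seq_limit] at hcl
      obtain ⟨x, hxS, hxlim⟩ := hcl
      have hcont : ContinuousAt σ t₁ := (hσ t₁ (le_of_lt ht₁pos)).continuousAt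
      have : Tendsto (fun n => σ (x n)) atTop (nhds (σ t₁)) := hcont.tendsto.comp hxlim
      exact le_of_tendsto this (Eventually.of_forall fun n => (hxS n).2)
    -- σ > 0 on (0, t₁)
    have hposlt : ∀ t, 0 < t → t < t₁ → 0 < σ t := by
      intro t ht htlt
      by_contra hc
      push_neg at hc
      exact absurd (csInf_le hbdd ⟨ht, hc⟩) (not_le.mpr htlt)
    -- σ' monotone on [0, t₁]
    have hmono : MonotoneOn σ' (Set.Icc 0 t₁) := by
      apply monotoneOn_of_deriv_nonneg (convex_Icc 0 t₁)
        (hσ'c.mono (Set.Icc_subset_Ici_self))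
      · intro x hx
        rw [interior_Icc] at hx
        exact (hσ' x (le_of_lt hx.1)).differentiableAt.differentiableWithinAt
      · intro x hx
        rw [interior_Icc] at hx
        rw [(hσ' x (le_of_lt hx.1)).deriv]
        exact mul_nonneg (hκnonneg x (le_of_lt hx.1)) (le_of_lt (hposlt x hx.1 hx.2))
    have hσ'ge : ∀ t ∈ Set.Icc (0:ℝ) t₁, 1 ≤ σ' t := by
      intro t ht
      have := hmono (Set.left_mem_Icc.mpr (le_of_lt ht₁pos)) ht ht.1
      rwa [hσ'0] at this
    -- σ t₁ ≥ t₁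
    have hid : MonotoneOn (fun t => σ t - t) (Set.Icc 0 t₁) := by
      apply monotoneOn_of_deriv_nonneg (convex_Icc 0 t₁)
        ((hσc.mono Set.Icc_subset_Ici_self).sub (continuousOn_id))
      · intro x hx
        rw [interior_Icc] at hx
        exact (((hσ x (le_of_lt hx.1)).sub (hasDerivAt_id x))).differentiableAt.differentiableWithinAt
      · intro x hx
        rw [interior_Icc] at hx
        rw [((hσ x (le_of_lt hx.1)).sub (hasDerivAt_id x)).deriv]
        have := hσ'ge x ⟨le_of_lt hx.1, le_of_lt hx.2⟩
        linarith
    have := hid (Set.left_mem_Icc.mpr (le_of_lt ht₁pos))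
      (Set.right_mem_Icc.mpr (le_of_lt ht₁pos)) (le_of_lt ht₁pos)
    simp only [hσ0] at this
    linarith
  -- σ' monotone on [0, ∞), σ' ≥ 1, σ t ≥ t
  have hσnonneg : ∀ t, 0 ≤ t → 0 ≤ σ t := by
    intro t ht
    rcases eq_or_lt_of_le ht with h | h
    · rw [← h, hσ0]
    · exact le_of_lt (hpos t h)
  have hmono : MonotoneOn σ' (Set.Ici 0) := by
    apply monotoneOn_of_deriv_nonneg (convex_Ici 0) hσ'c
    · intro x hx
      rw [interior_Ici] at hx
      exact (hσ' x (le_of_lt hx : (0:ℝ) ≤ x)).differentiableAt.differentiableWithinAt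
    · intro x hx
      rw [interior_Ici] at hx
      rw [(hσ' x (le_of_lt hx : (0:ℝ) ≤ x)).deriv]
      exact mul_nonneg (hκnonneg x (le_of_lt hx)) (le_of_lt (hpos x hx))
  have hσ'ge : ∀ t, 0 ≤ t → 1 ≤ σ' t := by
    intro t ht
    have := hmono (Set.self_mem_Ici) ht ht
    rwa [hσ'0] at this
  have hσge : ∀ t, 0 ≤ t → t ≤ σ t := by
    intro t ht
    have hid : MonotoneOn (fun t => σ t - t) (Set.Ici 0) := by
      apply monotoneOn_of_deriv_nonneg (convex_Ici 0) (hσc.sub continuousOn_id)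
      · intro x hx
        rw [interior_Ici] at hx
        exact (((hσ x (le_of_lt hx : (0:ℝ) ≤ x)).sub (hasDerivAt_id x))).differentiableAt.differentiableWithinAt
      · intro x hx
        rw [interior_Ici] at hx
        rw [((hσ x (le_of_lt hx : (0:ℝ) ≤ x)).sub (hasDerivAt_id x)).deriv]
        have := hσ'ge x (le_of_lt hx)
        linarith
    have := hid Set.self_mem_Ici ht ht
    simp only [hσ0] at this
    linarith
  -- g := t σ' t - σ t, g monotone, g ≥ 0
  obtain ⟨g, hgdef⟩ : ∃ g : ℝ → ℝ, g = fun t => t * σ' t - σ t := ⟨_, rfl⟩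
  have hgderiv : ∀ t ∈ Set.Ici (0:ℝ), HasDerivAt g (t * (κ t * σ t)) t := by
    intro t ht
    rw [hgdef]
    have h1 : HasDerivAt (fun s => s * σ' s) (1 * σ' t + t * (κ t * σ t)) t :=
      (hasDerivAt_id t).mul (hσ' t ht)
    have h2 := h1.sub (hσ t ht)
    exact h2.congr_deriv (by ring)
  have hgmono : MonotoneOn g (Set.Ici 0) := by
    apply monotoneOn_of_deriv_nonneg (convex_Ici 0)
    · exact fun t ht => (hgderiv t ht).continuousAt.continuousWithinAt
    · intro x hx
      rw [interior_Ici] at hx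
      exact (hgderiv x (le_of_lt hx : (0:ℝ) ≤ x)).differentiableAt.differentiableWithinAt
    · intro x hx
      rw [interior_Ici] at hx
      rw [(hgderiv x (le_of_lt hx : (0:ℝ) ≤ x)).deriv]
      exact mul_nonneg (le_of_lt hx)
        (mul_nonneg (hκnonneg x (le_of_lt hx)) (hσnonneg x (le_of_lt hx)))
  have hg0 : g 0 = 0 := by simp [hgdef, hσ0]
  have hgnonneg : ∀ t, 0 ≤ t → 0 ≤ g t := by
    intro t ht
    have := hgmono Set.self_mem_Ici ht ht
    rwa [hg0] at this
  -- main limit: g t / σ t → 0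
  have hlim : Tendsto (fun t => g t / σ t) atTop (nhds 0) := by
    rw [Metric.tendsto_atTop]
    intro ε hε
    -- get T with t² κ t ≤ ε/3 for t ≥ T
    have hev : ∀ᶠ t in atTop, ‖κ t‖ ≤ (ε/3) * ‖t ^ (-2:ℝ)‖ :=
      hκo.bound (by positivity)
    rw [eventually_atTop] at hev
    obtain ⟨T₀, hT₀⟩ := hev
    set T := max T₀ 1 with hTdef
    have hT1 : (1:ℝ) ≤ T := le_max_right _ _
    have hTpos : (0:ℝ) < T := lt_of_lt_of_le one_pos hT1
    have hκbound : ∀ t, T ≤ t → t^2 * κ t ≤ ε/3 := by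
      intro t ht
      have htpos : (0:ℝ) < t := lt_of_lt_of_le hTpos ht
      have := hT₀ t (le_trans (le_max_left _ _) ht)
      rw [Real.norm_eq_abs, Real.norm_eq_abs, abs_of_nonneg (hκnonneg t (le_of_lt htpos)),
        abs_of_nonneg (Real.rpow_nonneg (le_of_lt htpos) _)] at this
      have hrpow : t ^ (-2:ℝ) = (t^2)⁻¹ := by
        rw [← Real.rpow_natCast t 2, ← Real.rpow_neg (le_of_lt htpos)]
        norm_num
      rw [hrpow] at this
      have ht2 : (0:ℝ) < t^2 := by positivity
      calc t^2 * κ t ≤ t^2 * (ε/3 * (t^2)⁻¹) := by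
            exact mul_le_mul_of_nonneg_left this (le_of_lt ht2)
        _ = ε/3 := by field_simp
    -- h := g - (ε/3) σ antitone on [T, ∞)
    have hanti : AntitoneOn (fun t => g t - ε/3 * σ t) (Set.Ici T) := by
      apply antitoneOn_of_deriv_nonpos (convex_Ici T)
      · intro t ht
        have ht0 : (0:ℝ) ≤ t := le_trans (le_of_lt hTpos) ht
        exact ((hgderiv t ht0).sub ((hσ t ht0).const_mul (ε/3))).continuousAt.continuousWithinAt
      · intro x hx
        rw [interior_Ici] at hx
        have hx0 : (0:ℝ) ≤ x := le_of_lt (lt_trans hTpos hx)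
        exact ((hgderiv x hx0).sub ((hσ x hx0).const_mul (ε/3))).differentiableAt.differentiableWithinAt
      · intro x hx
        rw [interior_Ici] at hx
        have hxpos : (0:ℝ) < x := lt_trans hTpos hx
        have hx0 : (0:ℝ) ≤ x := le_of_lt hxpos
        rw [HasDerivAt.deriv (f := fun t => g t - ε/3 * σ t) ((hgderiv x hx0).sub ((hσ x hx0).const_mul (ε/3)))]
        have h1 : σ x ≤ x * σ' x := by
          have := hgnonneg x hx0; simp only [hgdef] at this; linarith
        have h2 : x * (κ x * σ x) ≤ x * (κ x * (x * σ' x)) :=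
          mul_le_mul_of_nonneg_left
            (mul_le_mul_of_nonneg_left h1 (hκnonneg x hx0)) hx0
        have h3 : x * (κ x * (x * σ' x)) = (x^2 * κ x) * σ' x := by ring
        have h4 : (x^2 * κ x) * σ' x ≤ (ε/3) * σ' x := by
          apply mul_le_mul_of_nonneg_right (hκbound x (le_of_lt hx))
          linarith [hσ'ge x hx0]
        linarith
    -- choose N
    have hgTnonneg : 0 ≤ g T := hgnonneg T (le_of_lt hTpos)
    set N := max T (3 * g T / ε + 1) with hNdef
    refine ⟨N, fun t ht => ?_⟩
    have htT : T ≤ t := le_trans (le_max_left _ _) ht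
    have ht0 : (0:ℝ) ≤ t := le_trans (le_of_lt hTpos) htT
    have hσtpos : 0 < σ t := hpos t (lt_of_lt_of_le hTpos htT)
    have hgt : g t ≤ g T + ε/3 * σ t := by
      have := hanti (Set.self_mem_Ici) htT htT
      have hσT : 0 ≤ σ T := hσnonneg T (le_of_lt hTpos)
      simp only at this
      nlinarith
    have htN : 3 * g T / ε + 1 ≤ t := le_trans (le_max_right _ _) ht
    have hσtN : 3 * g T / ε + 1 ≤ σ t := le_trans htN (hσge t ht0)
    have hfrac : g T / σ t < ε/2 := by
      rw [div_lt_iff₀ hσtpos]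
      have : ε/2 * (3 * g T / ε + 1) = 3/2 * g T + ε/2 := by field_simp
      nlinarith
    have hfinal : g t / σ t < ε := by
      have hgTlt : g T < ε/2 * σ t := by
        have h6 := mul_lt_mul_of_pos_right hfrac hσtpos
        rwa [div_mul_cancel₀ _ (ne_of_gt hσtpos)] at h6
      rw [div_lt_iff₀ hσtpos]
      linarith [hgt, hgTlt, mul_pos hε hσtpos]
    rw [Real.dist_eq, sub_zero, abs_of_nonneg (div_nonneg (hgnonneg t ht0) (le_of_lt hσtpos))]
    exact hfinal
  -- conclude
  have heq : ∀ᶠ t in atTop, g t / σ t + 1 = t * σ' t / σ t := by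
    filter_upwards [eventually_gt_atTop (0:ℝ)] with t ht
    have hσt : σ t ≠ 0 := ne_of_gt (hpos t ht)
    field_simp [hgdef]
    simp only [hgdef]; ring
  have : Tendsto (fun t => g t / σ t + 1) atTop (nhds (0 + 1)) :=
    hlim.add tendsto_const_nhds
  rw [zero_add] at this
  exact this.congr' heq
end

section
/- Let κ : [0,∞) → [0,∞) be non-increasing with b₀ := ∫_0^∞ t κ(t) dt < ∞, and let j solve j'' = κ j, j(0)=0, j'(0)=1, j > 0 on (0,∞). Then ∫_0^∞ j(s) κ(s) ds ≤ b₀ e^{b₀}. -/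
open MeasureTheory

/-- with `κ` non-increasing, non-negative, of finite first moment
`b₀ = ∫_0^∞ t κ(t) dt`, and `j` the solution of `j'' = κ j`, `j(0)=0`, `j'(0)=1`,
`j > 0` on `(0,∞)`, one has `∫_0^∞ j(s) κ(s) ds ≤ b₀ e^{b₀}`. -/
theorem stmt4 (κ j j' : ℝ → ℝ)
    (hκmono : AntitoneOn κ (Set.Ici 0))
    (hκnonneg : ∀ t, 0 ≤ t → 0 ≤ κ t)
    (hκint : IntegrableOn (fun t => t * κ t) (Set.Ici 0))
    (hj : ∀ t ∈ Set.Ici (0:ℝ), HasDerivAt j (j' t) t)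
    (hj' : ∀ t ∈ Set.Ici (0:ℝ), HasDerivAt j' (κ t * j t) t)
    (hj0 : j 0 = 0) (hj'0 : j' 0 = 1)
    (hjpos : ∀ t : ℝ, 0 < t → 0 < j t) :
    ∫ s in Set.Ici (0:ℝ), j s * κ s
      ≤ (∫ s in Set.Ici (0:ℝ), s * κ s) * Real.exp (∫ s in Set.Ici (0:ℝ), s * κ s) := by
  set b := ∫ s in Set.Ici (0:ℝ), s * κ s with hbdef
  have hbnonneg : 0 ≤ b := by
    apply setIntegral_nonneg measurableSet_Ici
    intro x hx
    exact mul_nonneg hx (hκnonneg x hx)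
  have hjnonneg : ∀ t ∈ Set.Ici (0:ℝ), 0 ≤ j t := by
    intro t ht
    rcases eq_or_lt_of_le (show (0:ℝ) ≤ t from ht) with h | h
    · simp [← h, hj0]
    · exact (hjpos t h).le
  have hjcont : ContinuousOn j (Set.Ici 0) :=
    fun t ht => ((hj t ht).continuousAt).continuousWithinAt
  have hj'cont : ContinuousOn j' (Set.Ici 0) :=
    fun t ht => ((hj' t ht).continuousAt).continuousWithinAt
  -- j' is monotone on [0, ∞)
  have hj'mono : MonotoneOn j' (Set.Ici 0) := by
    apply monotoneOn_of_deriv_nonneg (convex_Ici 0) hj'cont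
    · intro x hx
      rw [interior_Ici] at hx
      exact ((hj' x (show (0:ℝ) ≤ x from le_of_lt hx)).differentiableAt).differentiableWithinAt
    · intro x hx
      rw [interior_Ici] at hx
      rw [(hj' x (show (0:ℝ) ≤ x from le_of_lt hx)).deriv]
      exact mul_nonneg (hκnonneg x hx.le) (hjnonneg x (show (0:ℝ) ≤ x from hx.le))
  have hj'ge1 : ∀ t ∈ Set.Ici (0:ℝ), 1 ≤ j' t := by
    intro t ht
    calc (1:ℝ) = j' 0 := hj'0.symm
    _ ≤ j' t := hj'mono (Set.self_mem_Ici) ht ht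
  have hj'pos : ∀ t ∈ Set.Ici (0:ℝ), 0 < j' t :=
    fun t ht => lt_of_lt_of_le one_pos (hj'ge1 t ht)
  -- j t ≤ t * j' t
  have hjle : ∀ t ∈ Set.Ici (0:ℝ), j t ≤ t * j' t := by
    have hg : MonotoneOn (fun t => t * j' t - j t) (Set.Ici 0) := by
      apply monotoneOn_of_deriv_nonneg (convex_Ici 0)
      · exact ((continuousOn_id.mul hj'cont).sub hjcont)
      · intro x hx
        rw [interior_Ici] at hx
        exact (((hasDerivAt_id' (x := x)).mul (hj' x (show (0:ℝ) ≤ x from hx.le))).sub (hj x (show (0:ℝ) ≤ x from hx.le))).differentiableAt.differentiableWithinAt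
      · intro x hx
        rw [interior_Ici] at hx
        have hd : HasDerivAt (fun t => t * j' t - j t) _ x :=
          ((hasDerivAt_id' (x := x)).mul (hj' x (show (0:ℝ) ≤ x from hx.le))).sub (hj x (show (0:ℝ) ≤ x from hx.le))
        rw [hd.deriv]
        have := mul_nonneg (hκnonneg x hx.le) (hjnonneg x (show (0:ℝ) ≤ x from hx.le))
        nlinarith [(show (0:ℝ) < x from hx).le]
    intro t ht
    have := hg Set.self_mem_Ici ht ht
    simp only [hj0, zero_mul, sub_zero] at this
    linarith
  -- key bound : j' T ≤ exp b for T ≥ 0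
  have key : ∀ T : ℝ, 0 ≤ T → j' T ≤ Real.exp b := by
    intro T hT
    have huIcc : Set.uIcc (0:ℝ) T = Set.Icc 0 T := Set.uIcc_of_le hT
    have hsub : Set.uIcc (0:ℝ) T ⊆ Set.Ici 0 := by rw [huIcc]; exact Set.Icc_subset_Ici_self
    have hκii : IntervalIntegrable κ volume 0 T :=
      (hκmono.mono hsub).intervalIntegrable
    have hLderiv : ∀ t ∈ Set.uIcc (0:ℝ) T,
        HasDerivAt (fun s => Real.log (j' s)) (κ t * j t / j' t) t := by
      intro t ht
      exact (hj' t (hsub ht)).log (ne_of_gt (hj'pos t (hsub ht)))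
    have hint : IntervalIntegrable (fun t => κ t * j t / j' t) volume 0 T := by
      have : IntervalIntegrable (fun t => κ t * (j t / j' t)) volume 0 T := by
        apply hκii.mul_continuousOn
        exact (hjcont.mono hsub).div (hj'cont.mono hsub)
          (fun x hx => ne_of_gt (hj'pos x (hsub hx)))
      exact this.congr (fun t _ => (mul_div_assoc _ _ _).symm)
    have hftc := intervalIntegral.integral_eq_sub_of_hasDerivAt hLderiv hint
    have htκint : IntervalIntegrable (fun t => t * κ t) volume 0 T := by
      apply IntegrableOn.intervalIntegrable
      rw [huIcc]
      exact hκint.mono_set (Set.Icc_subset_Ici_self)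
    have hmono1 : ∫ t in (0:ℝ)..T, κ t * j t / j' t ≤ ∫ t in (0:ℝ)..T, t * κ t := by
      apply intervalIntegral.integral_mono_on hT hint htκint
      intro x hx
      have hx0 : x ∈ Set.Ici (0:ℝ) := hx.1
      have h1 : κ x * j x ≤ κ x * (x * j' x) :=
        mul_le_mul_of_nonneg_left (hjle x hx0) (hκnonneg x hx0.out)
      rw [div_le_iff₀ (hj'pos x hx0)]
      nlinarith
    have hmono2 : ∫ t in (0:ℝ)..T, t * κ t ≤ b := by
      rw [intervalIntegral.integral_of_le hT]
      apply setIntegral_mono_set hκint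
      · filter_upwards [ae_restrict_mem measurableSet_Ici] with x hx
        exact mul_nonneg hx (hκnonneg x hx)
      · exact Filter.Eventually.of_forall (fun x hx => le_of_lt hx.1)
    have hlog : Real.log (j' T) ≤ b := by
      have : Real.log (j' T) - Real.log (j' 0) = ∫ t in (0:ℝ)..T, κ t * j t / j' t := hftc.symm
      rw [hj'0, Real.log_one, sub_zero] at this
      linarith
    calc j' T = Real.exp (Real.log (j' T)) := (Real.exp_log (hj'pos T hT)).symm
    _ ≤ Real.exp b := Real.exp_le_exp.mpr hlog
  -- partial integrals are bounded
  have hpartial : ∀ T : ℝ, 0 ≤ T → ∫ s in (0:ℝ)..T, j s * κ s ≤ Real.exp b - 1 := by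
    intro T hT
    have huIcc : Set.uIcc (0:ℝ) T = Set.Icc 0 T := Set.uIcc_of_le hT
    have hsub : Set.uIcc (0:ℝ) T ⊆ Set.Ici 0 := by rw [huIcc]; exact Set.Icc_subset_Ici_self
    have hκii : IntervalIntegrable κ volume 0 T :=
      (hκmono.mono hsub).intervalIntegrable
    have hint : IntervalIntegrable (fun t => κ t * j t) volume 0 T :=
      hκii.mul_continuousOn (hjcont.mono hsub)
    have hftc := intervalIntegral.integral_eq_sub_of_hasDerivAt
      (fun t ht => hj' t (hsub ht)) hint
    have : ∫ s in (0:ℝ)..T, j s * κ s = ∫ s in (0:ℝ)..T, κ s * j s := by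
      congr 1; funext s; ring
    rw [this, hftc, hj'0]
    have := key T hT
    linarith
  -- exp b - 1 ≤ b * exp b
  have hexp : Real.exp b - 1 ≤ b * Real.exp b := by
    have h2 : Real.exp (-b) * Real.exp b = 1 := by
      rw [← Real.exp_add]; simp
    nlinarith [Real.add_one_le_exp (-b), Real.exp_pos b, Real.exp_pos (-b)]
  by_cases hI : IntegrableOn (fun s => j s * κ s) (Set.Ici 0)
  · rw [integral_Ici_eq_integral_Ioi]
    have hI' : IntegrableOn (fun s => j s * κ s) (Set.Ioi 0) :=
      hI.mono_set Set.Ioi_subset_Ici_self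
    have htend := intervalIntegral_tendsto_integral_Ioi 0 hI' (Filter.tendsto_id (α := ℝ))
    have hle : ∫ s in Set.Ioi (0:ℝ), j s * κ s ≤ Real.exp b - 1 := by
      apply le_of_tendsto htend
      filter_upwards [Filter.eventually_ge_atTop (0:ℝ)] with T hT
      exact hpartial T hT
    calc ∫ s in Set.Ioi (0:ℝ), j s * κ s ≤ Real.exp b - 1 := hle
    _ ≤ b * Real.exp b := hexp
  · rw [integral_undef hI]
    positivity
end
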